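/- Let (A,C)_ψ be a factorisable entwining structure, B = C^{*op}, X = B#_ψ̄A. The map θ from the k-module of integrals Int(B#_ψ̄A) = {λ ∈ Hom(B,A) : a·λ = λ·a for all a ∈ A} to the k-module of (A,X)-bimodule maps _AHom_X(X, Hom(B,A)), given by θ(λ)(x) = λ·x, is a k-module isomorphism with inverse φ ↦ φ(1_X). -/

import Mathlib

open TensorProduct LinearMap

noncomputable section

variable (k A C : Type*) [CommRing k] [Ring A] [Algebra k A]
  [AddCommGroup C] [Module k C] [Coalgebra k C]

/-- An entwining structure `(A,C)_ψ` over `k`. -/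
structure Entwining where
  psi : C ⊗[k] A →ₗ[k] A ⊗[k] C
  mul_compat :
    psi ∘ₗ lTensor C (LinearMap.mul' k A)
      = rTensor C (LinearMap.mul' k A)
        ∘ₗ (TensorProduct.assoc k A A C).symm.toLinearMap
        ∘ₗ lTensor A psi
        ∘ₗ (TensorProduct.assoc k A C A).toLinearMap
        ∘ₗ rTensor A psi
        ∘ₗ (TensorProduct.assoc k C A A).symm.toLinearMap
  one_compat : ∀ c : C, psi (c ⊗ₜ[k] (1 : A)) = (1 : A) ⊗ₜ[k] c
  comul_compat :
    lTensor A (Coalgebra.comul (R := k) (A := C)) ∘ₗ psi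
      = (TensorProduct.assoc k A C C).toLinearMap
        ∘ₗ rTensor C psi
        ∘ₗ (TensorProduct.assoc k C A C).symm.toLinearMap
        ∘ₗ lTensor C psi
        ∘ₗ (TensorProduct.assoc k C C A).toLinearMap
        ∘ₗ rTensor A (Coalgebra.comul (R := k) (A := C))
  counit_compat : ∀ (c : C) (a : A),
    (TensorProduct.rid k A)
        ((lTensor A (Coalgebra.counit (R := k) (A := C))) (psi (c ⊗ₜ[k] a)))
      = Coalgebra.counit (R := k) c • a

variable {k A C} in
/-- `act` is a unital associative right `A`-action on `M`. -/
def IsRAction {M : Type*} [AddCommGroup M] [Module k M]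
    (act : M ⊗[k] A →ₗ[k] M) : Prop :=
  (∀ m : M, act (m ⊗ₜ[k] (1 : A)) = m) ∧
  act ∘ₗ lTensor M (LinearMap.mul' k A)
    = act ∘ₗ rTensor A act ∘ₗ (TensorProduct.assoc k M A A).symm.toLinearMap

variable {k A C} in
/-- `coact` is a counital coassociative right `C`-coaction on `M`. -/
def IsRCoaction {M : Type*} [AddCommGroup M] [Module k M]
    (coact : M →ₗ[k] M ⊗[k] C) : Prop :=
  (∀ m : M, (TensorProduct.rid k M)
      ((lTensor M (Coalgebra.counit (R := k) (A := C))) (coact m)) = m) ∧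
  rTensor C coact ∘ₗ coact
    = (TensorProduct.assoc k M C C).symm.toLinearMap
      ∘ₗ lTensor M (Coalgebra.comul (R := k) (A := C)) ∘ₗ coact

variable {k A C} in
/-- The compatibility condition making `(M, act, coact)` an entwined
`(A,C)_ψ`-module: `ρ^M(m·a) = m₍₀₎·a_α ⊗ m₍₁₎^α`. -/
def IsEntwinedModule (E : Entwining k A C) {M : Type*} [AddCommGroup M] [Module k M]
    (act : M ⊗[k] A →ₗ[k] M) (coact : M →ₗ[k] M ⊗[k] C) : Prop :=
  IsRAction act ∧ IsRCoaction coact ∧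
  coact ∘ₗ act
    = rTensor C act
      ∘ₗ (TensorProduct.assoc k M A C).symm.toLinearMap
      ∘ₗ lTensor M E.psi
      ∘ₗ (TensorProduct.assoc k M C A).toLinearMap
      ∘ₗ rTensor A coact

variable {k A C} in
/-- A morphism of entwined modules: right `A`-linear and right `C`-colinear. -/
def IsEntwinedHom {M N : Type*} [AddCommGroup M] [Module k M]
    [AddCommGroup N] [Module k N]
    (actM : M ⊗[k] A →ₗ[k] M) (coactM : M →ₗ[k] M ⊗[k] C)
    (actN : N ⊗[k] A →ₗ[k] N) (coactN : N →ₗ[k] N ⊗[k] C)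
    (f : M →ₗ[k] N) : Prop :=
  (f ∘ₗ actM = actN ∘ₗ rTensor A f) ∧ (coactN ∘ₗ f = rTensor C f ∘ₗ coactM)

variable {k A C} in
/-- Evaluation of the first (dual) factor at `c`: `ξ ⊗ a ↦ ξ(c) • a`. -/
def evFst (c : C) : Module.Dual k C ⊗[k] A →ₗ[k] A :=
  TensorProduct.lift ((LinearMap.lsmul k A) ∘ₗ
    (LinearMap.applyₗ (R := k) c : (C →ₗ[k] k) →ₗ[k] k))

variable {k A C} in
/-- Evaluation of the second (coalgebra) factor against `ξ`: `a ⊗ c ↦ ξ(c) • a`. -/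
def evSnd (ξ : Module.Dual k C) : A ⊗[k] C →ₗ[k] A :=
  (TensorProduct.rid k A).toLinearMap ∘ₗ lTensor A ξ

variable {k A C} in
/-- `ψ̄ : A ⊗ C* → C* ⊗ A` is a factorisation map for the entwining `ψ`:
`⟨c^α, ξ⟩ a_α = ξ_i(c) a^i`. -/
def IsFactorisation (E : Entwining k A C)
    (ψbar : A ⊗[k] Module.Dual k C →ₗ[k] Module.Dual k C ⊗[k] A) : Prop :=
  ∀ (a : A) (ξ : Module.Dual k C) (c : C),
    evFst c (ψbar (a ⊗ₜ[k] ξ)) = evSnd ξ (E.psi (c ⊗ₜ[k] a))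

/-- The product of `B = C^{*op}`, i.e. the opposite convolution product:
`⟨c, b b'⟩ = ⟨c₍₂₎, b⟩ ⟨c₍₁₎, b'⟩`, as a linear map `B ⊗ B →ₗ B`. -/
def opConv : Module.Dual k C ⊗[k] Module.Dual k C →ₗ[k] Module.Dual k C :=
  ((LinearMap.llcomp k C (C ⊗[k] C) k).flip (Coalgebra.comul (R := k) (A := C)))
  ∘ₗ (LinearMap.llcomp k (C ⊗[k] C) (k ⊗[k] k) k (LinearMap.mul' k k))
  ∘ₗ TensorProduct.homTensorHomMap (RingHom.id k) C C k k
  ∘ₗ (TensorProduct.comm k (Module.Dual k C) (Module.Dual k C)).toLinearMap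

variable {k A C} in
/-- The multiplication of the smash product `B #_ψ̄ A` on `B ⊗ A`, `B = C^{*op}`:
`(b ⊗ a)(b' ⊗ a') = b ψ̄(a ⊗ b') a'`. -/
def smashMul (ψbar : A ⊗[k] Module.Dual k C →ₗ[k] Module.Dual k C ⊗[k] A) :
    (Module.Dual k C ⊗[k] A) ⊗[k] (Module.Dual k C ⊗[k] A) →ₗ[k]
      Module.Dual k C ⊗[k] A :=
  rTensor A (opConv k C)
  ∘ₗ (TensorProduct.assoc k (Module.Dual k C) (Module.Dual k C) A).symm.toLinearMap
  ∘ₗ lTensor (Module.Dual k C) (lTensor (Module.Dual k C) (LinearMap.mul' k A))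
  ∘ₗ lTensor (Module.Dual k C) (TensorProduct.assoc k (Module.Dual k C) A A).toLinearMap
  ∘ₗ lTensor (Module.Dual k C) (rTensor A ψbar)
  ∘ₗ lTensor (Module.Dual k C) (TensorProduct.assoc k A (Module.Dual k C) A).symm.toLinearMap
  ∘ₗ (TensorProduct.assoc k (Module.Dual k C) A (Module.Dual k C ⊗[k] A)).toLinearMap

/-- The unit `ε ⊗ 1_A` of the smash product. -/
def smashOne : Module.Dual k C ⊗[k] A :=
  (Coalgebra.counit (R := k) (A := C)) ⊗ₜ[k] (1 : A)

variable {k A C} in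
/-- The map `X ⊗ B → X` underlying the right `X`-action on `Hom(B,N)`:
`(b ⊗ a) ⊗ b' ↦ (b b'_i) ⊗ a^i` where `ψ̄(a ⊗ b') = b'_i ⊗ a^i`. -/
def homActAux (ψbar : A ⊗[k] Module.Dual k C →ₗ[k] Module.Dual k C ⊗[k] A) :
    (Module.Dual k C ⊗[k] A) ⊗[k] Module.Dual k C →ₗ[k]
      Module.Dual k C ⊗[k] A :=
  rTensor A (opConv k C)
  ∘ₗ (TensorProduct.assoc k (Module.Dual k C) (Module.Dual k C) A).symm.toLinearMap
  ∘ₗ lTensor (Module.Dual k C) ψbar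
  ∘ₗ (TensorProduct.assoc k (Module.Dual k C) A (Module.Dual k C)).toLinearMap

variable {k A C} in
/-- The right `X`-action on `Hom(B,N)` (`X = B #_ψ̄ A`, `B = C^{*op}`, `N` a
right `A`-module): `(f · (b ⊗ a))(b') = f(b b'_i) · a^i`. -/
def homAct {N : Type*} [AddCommGroup N] [Module k N]
    (actN : N ⊗[k] A →ₗ[k] N)
    (ψbar : A ⊗[k] Module.Dual k C →ₗ[k] Module.Dual k C ⊗[k] A)
    (f : Module.Dual k C →ₗ[k] N) (x : Module.Dual k C ⊗[k] A) :
    Module.Dual k C →ₗ[k] N :=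
  actN ∘ₗ rTensor A f ∘ₗ homActAux ψbar
    ∘ₗ TensorProduct.mk k (Module.Dual k C ⊗[k] A) (Module.Dual k C) x

variable {k A C} in
/-- `actX` is a unital associative right action of the smash product
`X = B #_ψ̄ A` on `M`. -/
def IsSmashAction (ψbar : A ⊗[k] Module.Dual k C →ₗ[k] Module.Dual k C ⊗[k] A)
    {M : Type*} [AddCommGroup M] [Module k M]
    (actX : M ⊗[k] (Module.Dual k C ⊗[k] A) →ₗ[k] M) : Prop :=
  (∀ m : M, actX (m ⊗ₜ[k] smashOne k A C) = m) ∧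
  actX ∘ₗ lTensor M (smashMul ψbar)
    = actX ∘ₗ rTensor (Module.Dual k C ⊗[k] A) actX
      ∘ₗ (TensorProduct.assoc k M (Module.Dual k C ⊗[k] A)
          (Module.Dual k C ⊗[k] A)).symm.toLinearMap

variable {k A C} in
/-- `f : M → Hom(B,N)` is a morphism of right `X`-modules. -/
def IsHomBXLinear (ψbar : A ⊗[k] Module.Dual k C →ₗ[k] Module.Dual k C ⊗[k] A)
    {M N : Type*} [AddCommGroup M] [Module k M] [AddCommGroup N] [Module k N]
    (actX : M ⊗[k] (Module.Dual k C ⊗[k] A) →ₗ[k] M)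
    (actN : N ⊗[k] A →ₗ[k] N)
    (f : M →ₗ[k] (Module.Dual k C →ₗ[k] N)) : Prop :=
  ∀ (m : M) (x : Module.Dual k C ⊗[k] A),
    f (actX (m ⊗ₜ[k] x)) = homAct actN ψbar (f m) x

variable {k A C} in
/-- `λ : B → A` is an integral in `B #_ψ̄ A`: `a·λ = λ·a` for all `a ∈ A`. -/
def IsSmashIntegral (ψbar : A ⊗[k] Module.Dual k C →ₗ[k] Module.Dual k C ⊗[k] A)
    (lam : Module.Dual k C →ₗ[k] A) : Prop :=
  ∀ a : A,
    (LinearMap.mulLeft k a) ∘ₗ lam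
      = homAct (LinearMap.mul' k A) ψbar lam
          ((Coalgebra.counit (R := k) (A := C)) ⊗ₜ[k] a)

variable {k A C} in
/-- `Φ : X → Hom(B,A)` is an `(A,X)`-bimodule map. -/
def IsBimoduleMap (ψbar : A ⊗[k] Module.Dual k C →ₗ[k] Module.Dual k C ⊗[k] A)
    (Φ : Module.Dual k C ⊗[k] A →ₗ[k] (Module.Dual k C →ₗ[k] A)) : Prop :=
  (∀ x x' : Module.Dual k C ⊗[k] A,
    Φ (smashMul ψbar (x ⊗ₜ[k] x')) = homAct (LinearMap.mul' k A) ψbar (Φ x) x') ∧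
  (∀ (a : A) (x : Module.Dual k C ⊗[k] A),
    Φ (smashMul ψbar (((Coalgebra.counit (R := k) (A := C)) ⊗ₜ[k] a) ⊗ₜ[k] x))
      = (LinearMap.mulLeft k a) ∘ₗ Φ x)


set_option maxRecDepth 8000
set_option synthInstance.maxHeartbeats 1000000
set_option maxHeartbeats 1000000

namespace SmashProofAux

variable {k A C : Type*} [CommRing k] [Ring A] [Algebra k A]
  [AddCommGroup C] [Module k C] [Coalgebra k C]

theorem exists_dual_basis (k C : Type*) [CommRing k] [AddCommGroup C] [Module k C]
    [Module.Finite k C] [Module.Projective k C] :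
    ∃ (n : ℕ) (cb : Fin n → C) (xb : Fin n → Module.Dual k C),
      ∀ x : C, ∑ i, xb i x • cb i = x := by
  obtain ⟨n, π, hπ⟩ := Module.Finite.exists_fin' k C
  obtain ⟨σ, hσ⟩ := Module.projective_lifting_property π LinearMap.id hπ
  refine ⟨n, fun i => π (Pi.single i 1), fun i => (LinearMap.proj i) ∘ₗ σ, fun x => ?_⟩
  have h1 : ∑ i, Pi.single i (σ x i) = σ x := Finset.univ_sum_single (σ x)
  have h2 : π (σ x) = x := by
    have := LinearMap.congr_fun hσ x
    simpa using this
  calc ∑ i, ((LinearMap.proj i ∘ₗ σ) x) • π (Pi.single i (1:k))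
      = ∑ i, π (Pi.single i (σ x i)) := by
        refine Finset.sum_congr rfl fun i _ => ?_
        rw [← map_smul, ← Pi.single_smul, smul_eq_mul, mul_one]
        rfl
    _ = x := by rw [← map_sum, h1, h2]

lemma evSnd_tmul (ξ : Module.Dual k C) (a : A) (c : C) :
    evSnd (k := k) ξ (a ⊗ₜ[k] c) = ξ c • a := by simp [evSnd]

lemma evSnd_add (ξ ξ' : Module.Dual k C) (t : A ⊗[k] C) :
    evSnd (k := k) (ξ + ξ') t = evSnd ξ t + evSnd ξ' t := by
  simp [evSnd, lTensor_add]

lemma evSnd_smul (r : k) (ξ : Module.Dual k C) (t : A ⊗[k] C) :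
    evSnd (k := k) (r • ξ) t = r • evSnd ξ t := by
  simp [evSnd, lTensor_smul]

lemma evFst_tmul (c : C) (ξ : Module.Dual k C) (a : A) :
    evFst (k := k) c (ξ ⊗ₜ[k] a) = ξ c • a := by simp [evFst]

/-- `K c (a ⊗ ξ) = evSnd ξ (ψ (c ⊗ a))`, packaged linearly in `c`. -/
def KK (E : Entwining k A C) : C →ₗ[k] (A ⊗[k] Module.Dual k C →ₗ[k] A) :=
  LinearMap.flip <| TensorProduct.lift <| LinearMap.mk₂ k
    (fun a ξ => evSnd ξ ∘ₗ E.psi ∘ₗ (TensorProduct.mk k C A).flip a)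
    (by intro a a' ξ; ext c; simp [tmul_add])
    (by intro r a ξ; ext c; simp [tmul_smul])
    (by intro a ξ ξ'; ext c; simp [evSnd_add])
    (by intro r a ξ; ext c; simp [evSnd_smul])

lemma KK_tmul (E : Entwining k A C) (c : C) (a : A) (ξ : Module.Dual k C) :
    KK E c (a ⊗ₜ[k] ξ) = evSnd ξ (E.psi (c ⊗ₜ[k] a)) := by
  simp [KK]

lemma KK_one (E : Entwining k A C) (c : C) (b : Module.Dual k C) :
    KK E c ((1 : A) ⊗ₜ[k] b) = b c • (1 : A) := by
  rw [KK_tmul, E.one_compat, evSnd_tmul]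

lemma KK_counit (E : Entwining k A C) (c : C) (a : A) :
    KK E c (a ⊗ₜ[k] (Coalgebra.counit (R := k) (A := C))) =
      Coalgebra.counit (R := k) c • a := by
  rw [KK_tmul]
  simpa [evSnd] using E.counit_compat c a

lemma opConv_tmul (b b' : Module.Dual k C) :
    opConv k C (b ⊗ₜ[k] b')
      = (LinearMap.mul' k k) ∘ₗ TensorProduct.map b' b
          ∘ₗ (Coalgebra.comul (R := k) (A := C)) := by
  rfl

lemma opConv_tmul_apply (b b' : Module.Dual k C) (c : C) :
    opConv k C (b ⊗ₜ[k] b') c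
      = LinearMap.mul' k k
          (TensorProduct.map b' b (Coalgebra.comul (R := k) (A := C) c)) := by
  rw [opConv_tmul]; rfl

lemma opConv_counit_left (b : Module.Dual k C) :
    opConv k C ((Coalgebra.counit (R := k) (A := C)) ⊗ₜ[k] b) = b := by
  rw [opConv_tmul]
  ext c
  have hm : (TensorProduct.map b (Coalgebra.counit (R := k) (A := C))
        : C ⊗[k] C →ₗ[k] k ⊗[k] k)
      = rTensor k b ∘ₗ lTensor C (Coalgebra.counit (R := k) (A := C)) := by
    apply TensorProduct.ext'
    intro x y
    simp
  rw [LinearMap.comp_apply, LinearMap.comp_apply, hm, LinearMap.comp_apply,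
    Coalgebra.lTensor_counit_comul, rTensor_tmul, LinearMap.mul'_apply, mul_one]

lemma opConv_assoc (b b' b'' : Module.Dual k C) :
    opConv k C (opConv k C (b ⊗ₜ[k] b') ⊗ₜ[k] b'')
      = opConv k C (b ⊗ₜ[k] opConv k C (b' ⊗ₜ[k] b'')) := by
  rw [opConv_tmul, opConv_tmul, opConv_tmul, opConv_tmul]
  have h1 : (TensorProduct.map b''
        ((LinearMap.mul' k k) ∘ₗ TensorProduct.map b' b
          ∘ₗ (Coalgebra.comul (R := k) (A := C)))
        : C ⊗[k] C →ₗ[k] k ⊗[k] k)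
      = TensorProduct.map b'' ((LinearMap.mul' k k) ∘ₗ TensorProduct.map b' b)
          ∘ₗ lTensor C (Coalgebra.comul (R := k) (A := C)) := by
    apply TensorProduct.ext'; intro x y; simp
  have h2 : (TensorProduct.map
        ((LinearMap.mul' k k) ∘ₗ TensorProduct.map b'' b'
          ∘ₗ (Coalgebra.comul (R := k) (A := C))) b
        : C ⊗[k] C →ₗ[k] k ⊗[k] k)
      = TensorProduct.map ((LinearMap.mul' k k) ∘ₗ TensorProduct.map b'' b') b
          ∘ₗ rTensor C (Coalgebra.comul (R := k) (A := C)) := by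
    apply TensorProduct.ext'; intro x y; simp
  have h3 : ((LinearMap.mul' k k)
        ∘ₗ TensorProduct.map b'' ((LinearMap.mul' k k) ∘ₗ TensorProduct.map b' b)
        ∘ₗ (TensorProduct.assoc k C C C).toLinearMap : (C ⊗[k] C) ⊗[k] C →ₗ[k] k)
      = (LinearMap.mul' k k)
        ∘ₗ TensorProduct.map ((LinearMap.mul' k k) ∘ₗ TensorProduct.map b'' b') b := by
    apply TensorProduct.ext_threefold
    intro x y z
    simp [mul_assoc, mul_comm, mul_left_comm]
  ext c
  rw [LinearMap.comp_apply, LinearMap.comp_apply, h1, h2]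
  rw [LinearMap.comp_apply, LinearMap.comp_apply, LinearMap.comp_apply,
    LinearMap.comp_apply]
  rw [← Coalgebra.coassoc_apply (R := k) c]
  rw [← LinearMap.comp_apply, ← LinearMap.comp_apply, ← LinearMap.comp_apply]
  rw [← h3]
  rfl


section Basis

variable (E : Entwining k A C)
  (psibar : A ⊗[k] Module.Dual k C →ₗ[k] Module.Dual k C ⊗[k] A)
  {n : ℕ} (cb : Fin n → C) (xb : Fin n → Module.Dual k C)

lemma dual_db (hdb : ∀ x : C, ∑ i, xb i x • cb i = x) (η : Module.Dual k C) :
    ∑ i, η (cb i) • xb i = η := by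
  ext x
  rw [LinearMap.sum_apply]
  calc ∑ i, (η (cb i) • xb i) x = ∑ i, η (xb i x • cb i) := by
        refine Finset.sum_congr rfl fun i _ => ?_
        simp [smul_eq_mul, mul_comm]
    _ = η x := by rw [← map_sum, hdb]

lemma sum_tmul_evFst (hdb : ∀ x : C, ∑ i, xb i x • cb i = x)
    (s : Module.Dual k C ⊗[k] A) :
    ∑ i, xb i ⊗ₜ[k] evFst (k := k) (cb i) s = s := by
  induction s using TensorProduct.induction_on with
  | zero => simp
  | tmul η a =>
      calc ∑ i, xb i ⊗ₜ[k] evFst (k := k) (cb i) (η ⊗ₜ[k] a)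
          = ∑ i, (η (cb i) • xb i) ⊗ₜ[k] a := by
            refine Finset.sum_congr rfl fun i _ => ?_
            rw [evFst_tmul, tmul_smul, smul_tmul']
        _ = η ⊗ₜ[k] a := by rw [← sum_tmul, dual_db cb xb hdb]
  | add u v hu hv => simp only [map_add, tmul_add, Finset.sum_add_distrib, hu, hv]

lemma KK_collapse (hdb : ∀ x : C, ∑ i, xb i x • cb i = x) (c : C)
    (t : A ⊗[k] Module.Dual k C) :
    ∑ i, xb i c • (KK E (cb i)) t = KK E c t := by
  conv_rhs => rw [← hdb c, map_sum]
  rw [LinearMap.sum_apply]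
  exact Finset.sum_congr rfl fun i _ => by rw [map_smul, LinearMap.smul_apply]

lemma evFst_psibar (hfact : IsFactorisation E psibar) (c : C)
    (t : A ⊗[k] Module.Dual k C) :
    evFst (k := k) c (psibar t) = KK E c t := by
  induction t using TensorProduct.induction_on with
  | zero => simp
  | tmul a ξ => rw [hfact a ξ c, KK_tmul]
  | add u v hu hv => simp only [map_add, hu, hv]

lemma psibar_eq (hfact : IsFactorisation E psibar)
    (hdb : ∀ x : C, ∑ i, xb i x • cb i = x) (t : A ⊗[k] Module.Dual k C) :
    psibar t = ∑ i, xb i ⊗ₜ[k] KK E (cb i) t := by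
  conv_lhs => rw [← sum_tmul_evFst cb xb hdb (psibar t)]
  exact Finset.sum_congr rfl fun i _ => by rw [evFst_psibar E psibar hfact]

lemma homActAux_tmul (hfact : IsFactorisation E psibar)
    (hdb : ∀ x : C, ∑ i, xb i x • cb i = x)
    (b : Module.Dual k C) (a : A) (d : Module.Dual k C) :
    homActAux psibar ((b ⊗ₜ[k] a) ⊗ₜ[k] d)
      = ∑ i, opConv k C (b ⊗ₜ[k] xb i) ⊗ₜ[k] KK E (cb i) (a ⊗ₜ[k] d) := by
  rw [homActAux]
  simp only [LinearMap.comp_apply, LinearEquiv.coe_coe, TensorProduct.assoc_tmul,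
    lTensor_tmul]
  rw [psibar_eq E psibar cb xb hfact hdb (a ⊗ₜ[k] d), tmul_sum, map_sum, map_sum]
  exact Finset.sum_congr rfl fun i _ => by
    simp only [TensorProduct.assoc_symm_tmul, rTensor_tmul]

lemma smashMul_tmul (hfact : IsFactorisation E psibar)
    (hdb : ∀ x : C, ∑ i, xb i x • cb i = x)
    (b b' : Module.Dual k C) (a a' : A) :
    smashMul psibar ((b ⊗ₜ[k] a) ⊗ₜ[k] (b' ⊗ₜ[k] a'))
      = ∑ i, opConv k C (b ⊗ₜ[k] xb i) ⊗ₜ[k] (KK E (cb i) (a ⊗ₜ[k] b') * a') := by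
  rw [smashMul]
  simp only [LinearMap.comp_apply, LinearEquiv.coe_coe, TensorProduct.assoc_tmul,
    TensorProduct.assoc_symm_tmul, lTensor_tmul, rTensor_tmul]
  rw [psibar_eq E psibar cb xb hfact hdb (a ⊗ₜ[k] b')]
  rw [sum_tmul, map_sum, map_sum, tmul_sum, map_sum, map_sum]
  refine Finset.sum_congr rfl fun i _ => ?_
  simp only [LinearEquiv.coe_coe, lTensor_tmul, rTensor_tmul, TensorProduct.assoc_tmul,
    TensorProduct.assoc_symm_tmul, LinearMap.mul'_apply]

lemma homAct_mul'_tmul (hfact : IsFactorisation E psibar)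
    (hdb : ∀ x : C, ∑ i, xb i x • cb i = x)
    (f : Module.Dual k C →ₗ[k] A) (b : Module.Dual k C) (a : A)
    (d : Module.Dual k C) :
    homAct (LinearMap.mul' k A) psibar f (b ⊗ₜ[k] a) d
      = ∑ i, f (opConv k C (b ⊗ₜ[k] xb i)) * KK E (cb i) (a ⊗ₜ[k] d) := by
  rw [homAct]
  simp only [LinearMap.comp_apply, TensorProduct.mk_apply]
  rw [homActAux_tmul E psibar cb xb hfact hdb, map_sum, map_sum]
  simp only [rTensor_tmul, LinearMap.mul'_apply]

lemma KK_mul (hdb : ∀ x : C, ∑ i, xb i x • cb i = x)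
    (c : C) (a a' : A) (ξ : Module.Dual k C) :
    KK E c ((a * a') ⊗ₜ[k] ξ)
      = ∑ j, KK E c (a ⊗ₜ[k] xb j) * KK E (cb j) (a' ⊗ₜ[k] ξ) := by
  have h2 : ∀ (a₀ : A) (t : A ⊗[k] C),
      evSnd (k := k) ξ (rTensor C (LinearMap.mul' k A)
        ((TensorProduct.assoc k A A C).symm (a₀ ⊗ₜ[k] t))) = a₀ * evSnd ξ t := by
    intro a₀ t
    induction t using TensorProduct.induction_on with
    | zero => simp
    | tmul a₁ c₁ =>
        rw [TensorProduct.assoc_symm_tmul, rTensor_tmul, LinearMap.mul'_apply,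
          evSnd_tmul, evSnd_tmul, mul_smul_comm]
    | add u v hu hv => simp only [tmul_add, map_add, hu, hv, mul_add]
  have h3 : ∀ s : A ⊗[k] C,
      evSnd (k := k) ξ (rTensor C (LinearMap.mul' k A) ((TensorProduct.assoc k A A C).symm
        (lTensor A E.psi ((TensorProduct.assoc k A C A) (s ⊗ₜ[k] a')))))
      = ∑ j, evSnd (xb j) s * KK E (cb j) (a' ⊗ₜ[k] ξ) := by
    intro s
    induction s using TensorProduct.induction_on with
    | zero => simp
    | tmul a₀ c₀ =>
        rw [TensorProduct.assoc_tmul, lTensor_tmul, h2]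
        rw [← KK_tmul E c₀ a' ξ, ← KK_collapse E cb xb hdb c₀ (a' ⊗ₜ[k] ξ),
          Finset.mul_sum]
        refine Finset.sum_congr rfl fun j _ => ?_
        rw [evSnd_tmul, smul_mul_assoc, mul_smul_comm]
    | add u v hu hv =>
        simp only [add_tmul, map_add, hu, hv, add_mul, Finset.sum_add_distrib]
  rw [KK_tmul]
  have hmc := LinearMap.congr_fun E.mul_compat (c ⊗ₜ[k] (a ⊗ₜ[k] a'))
  simp only [LinearMap.comp_apply, LinearEquiv.coe_coe, lTensor_tmul,
    LinearMap.mul'_apply, TensorProduct.assoc_symm_tmul, rTensor_tmul] at hmc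
  rw [hmc, h3 (E.psi (c ⊗ₜ[k] a))]
  refine Finset.sum_congr rfl fun j _ => ?_
  rw [KK_tmul, KK_tmul]

lemma KK_opConv (hdb : ∀ x : C, ∑ i, xb i x • cb i = x)
    (c : C) (a : A) (b g : Module.Dual k C) :
    KK E c (a ⊗ₜ[k] opConv k C (b ⊗ₜ[k] g))
      = ∑ i, ∑ j, opConv k C (xb i ⊗ₜ[k] xb j) c •
          KK E (cb j) (KK E (cb i) (a ⊗ₜ[k] b) ⊗ₜ[k] g) := by
  have hA : ∀ s : A ⊗[k] C,
      evSnd (k := k) (opConv k C (b ⊗ₜ[k] g)) s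
        = (TensorProduct.rid k A) (lTensor A ((LinearMap.mul' k k) ∘ₗ TensorProduct.map g b)
            (lTensor A (Coalgebra.comul (R := k) (A := C)) s)) := by
    intro s
    induction s using TensorProduct.induction_on with
    | zero => simp
    | tmul a₁ c₁ =>
        rw [evSnd_tmul, lTensor_tmul, lTensor_tmul, TensorProduct.rid_tmul,
          opConv_tmul_apply, LinearMap.comp_apply]
    | add u v hu hv => simp only [map_add, hu, hv]
  have hQ2 : ∀ (c' : C) (s' : A ⊗[k] C),
      (TensorProduct.rid k A) (lTensor A ((LinearMap.mul' k k) ∘ₗ TensorProduct.map g b)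
        ((TensorProduct.assoc k A C C) (s' ⊗ₜ[k] c')))
        = b c' • evSnd (k := k) g s' := by
    intro c' s'
    induction s' using TensorProduct.induction_on with
    | zero => simp
    | tmul a₂ c₂ =>
        rw [TensorProduct.assoc_tmul, lTensor_tmul, TensorProduct.rid_tmul, evSnd_tmul,
          LinearMap.comp_apply, TensorProduct.map_tmul, LinearMap.mul'_apply,
          smul_smul, mul_comm]
    | add u v hu hv => simp only [add_tmul, map_add, hu, hv, smul_add]
  have hQ1 : ∀ (c₁ : C) (s : A ⊗[k] C),
      (TensorProduct.rid k A) (lTensor A ((LinearMap.mul' k k) ∘ₗ TensorProduct.map g b)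
        ((TensorProduct.assoc k A C C)
          (rTensor C E.psi ((TensorProduct.assoc k C A C).symm (c₁ ⊗ₜ[k] s)))))
        = KK E c₁ (evSnd (k := k) b s ⊗ₜ[k] g) := by
    intro c₁ s
    induction s using TensorProduct.induction_on with
    | zero => simp
    | tmul a₁ c' =>
        rw [TensorProduct.assoc_symm_tmul, rTensor_tmul, hQ2, evSnd_tmul,
          ← KK_tmul, ← smul_tmul', map_smul]
    | add u v hu hv =>
        simp only [tmul_add, map_add, add_tmul, hu, hv]
  have hQ : ∀ u : C ⊗[k] C,
      (TensorProduct.rid k A) (lTensor A ((LinearMap.mul' k k) ∘ₗ TensorProduct.map g b)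
        ((TensorProduct.assoc k A C C)
          (rTensor C E.psi ((TensorProduct.assoc k C A C).symm
            (lTensor C E.psi ((TensorProduct.assoc k C C A) (u ⊗ₜ[k] a)))))))
        = (∑ i, ∑ j, ((LinearMap.mul' k k) ∘ₗ TensorProduct.map (xb j) (xb i)).smulRight
            (KK E (cb j) (KK E (cb i) (a ⊗ₜ[k] b) ⊗ₜ[k] g))) u := by
    intro u
    induction u using TensorProduct.induction_on with
    | zero => simp
    | tmul c₁ c₂ =>
        rw [TensorProduct.assoc_tmul, lTensor_tmul, hQ1, ← KK_tmul E c₂ a b]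
        simp only [LinearMap.sum_apply, LinearMap.smulRight_apply, LinearMap.comp_apply,
          TensorProduct.map_tmul, LinearMap.mul'_apply]
        have hcalc : ∑ i, ∑ j, (xb j c₁ * xb i c₂) •
              KK E (cb j) (KK E (cb i) (a ⊗ₜ[k] b) ⊗ₜ[k] g)
            = KK E c₁ (KK E c₂ (a ⊗ₜ[k] b) ⊗ₜ[k] g) := by
          calc ∑ i, ∑ j, (xb j c₁ * xb i c₂) •
                  KK E (cb j) (KK E (cb i) (a ⊗ₜ[k] b) ⊗ₜ[k] g)
              = ∑ i, xb i c₂ • ∑ j, xb j c₁ •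
                  KK E (cb j) (KK E (cb i) (a ⊗ₜ[k] b) ⊗ₜ[k] g) := by
                refine Finset.sum_congr rfl fun i _ => ?_
                rw [Finset.smul_sum]
                refine Finset.sum_congr rfl fun j _ => ?_
                rw [smul_smul, mul_comm]
            _ = ∑ i, xb i c₂ • KK E c₁ (KK E (cb i) (a ⊗ₜ[k] b) ⊗ₜ[k] g) := by
                refine Finset.sum_congr rfl fun i _ => ?_
                rw [KK_collapse E cb xb hdb]
            _ = KK E c₁ ((∑ i, xb i c₂ • KK E (cb i) (a ⊗ₜ[k] b)) ⊗ₜ[k] g) := by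
                rw [sum_tmul, map_sum]
                refine Finset.sum_congr rfl fun i _ => ?_
                rw [← smul_tmul', map_smul]
            _ = KK E c₁ (KK E c₂ (a ⊗ₜ[k] b) ⊗ₜ[k] g) := by
                rw [KK_collapse E cb xb hdb]
        exact hcalc.symm
    | add u v hu hv => simp only [add_tmul, map_add, hu, hv]
  rw [KK_tmul, hA (E.psi (c ⊗ₜ[k] a))]
  have hcc := LinearMap.congr_fun E.comul_compat (c ⊗ₜ[k] a)
  simp only [LinearMap.comp_apply, LinearEquiv.coe_coe, rTensor_tmul] at hcc
  rw [hcc, hQ (Coalgebra.comul (R := k) (A := C) c)]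
  simp only [LinearMap.sum_apply, LinearMap.smulRight_apply, LinearMap.comp_apply,
    opConv_tmul_apply]

lemma psibar_opConv (hfact : IsFactorisation E psibar)
    (hdb : ∀ x : C, ∑ i, xb i x • cb i = x) (a : A) (b g : Module.Dual k C) :
    psibar (a ⊗ₜ[k] opConv k C (b ⊗ₜ[k] g))
      = ∑ i, ∑ j, opConv k C (xb i ⊗ₜ[k] xb j) ⊗ₜ[k]
          KK E (cb j) (KK E (cb i) (a ⊗ₜ[k] b) ⊗ₜ[k] g) := by
  rw [psibar_eq E psibar cb xb hfact hdb]
  calc ∑ p, xb p ⊗ₜ[k] KK E (cb p) (a ⊗ₜ[k] opConv k C (b ⊗ₜ[k] g))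
      = ∑ p, ∑ i, ∑ j, opConv k C (xb i ⊗ₜ[k] xb j) (cb p) •
          (xb p ⊗ₜ[k] KK E (cb j) (KK E (cb i) (a ⊗ₜ[k] b) ⊗ₜ[k] g)) := by
        refine Finset.sum_congr rfl fun p _ => ?_
        rw [KK_opConv E cb xb hdb, tmul_sum]
        refine Finset.sum_congr rfl fun i _ => ?_
        rw [tmul_sum]
        refine Finset.sum_congr rfl fun j _ => ?_
        rw [tmul_smul]
    _ = ∑ i, ∑ j, ∑ p, opConv k C (xb i ⊗ₜ[k] xb j) (cb p) •
          (xb p ⊗ₜ[k] KK E (cb j) (KK E (cb i) (a ⊗ₜ[k] b) ⊗ₜ[k] g)) := by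
        rw [Finset.sum_comm]
        refine Finset.sum_congr rfl fun i _ => ?_
        rw [Finset.sum_comm]
    _ = ∑ i, ∑ j, opConv k C (xb i ⊗ₜ[k] xb j) ⊗ₜ[k]
          KK E (cb j) (KK E (cb i) (a ⊗ₜ[k] b) ⊗ₜ[k] g) := by
        refine Finset.sum_congr rfl fun i _ => Finset.sum_congr rfl fun j _ => ?_
        calc ∑ p, opConv k C (xb i ⊗ₜ[k] xb j) (cb p) •
                (xb p ⊗ₜ[k] KK E (cb j) (KK E (cb i) (a ⊗ₜ[k] b) ⊗ₜ[k] g))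
            = (∑ p, opConv k C (xb i ⊗ₜ[k] xb j) (cb p) • xb p) ⊗ₜ[k]
                KK E (cb j) (KK E (cb i) (a ⊗ₜ[k] b) ⊗ₜ[k] g) := by
              rw [sum_tmul]
              exact Finset.sum_congr rfl fun p _ => smul_tmul' _ _ _
          _ = _ := by rw [dual_db cb xb hdb]

lemma psibar_opConv_apply (hfact : IsFactorisation E psibar)
    (hdb : ∀ x : C, ∑ i, xb i x • cb i = x)
    (L : Module.Dual k C ⊗[k] A →ₗ[k] A) (a : A) (b g : Module.Dual k C) :
    ∑ i, ∑ j, L (opConv k C (xb i ⊗ₜ[k] xb j) ⊗ₜ[k]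
        KK E (cb j) (KK E (cb i) (a ⊗ₜ[k] b) ⊗ₜ[k] g))
      = ∑ p, L (xb p ⊗ₜ[k] KK E (cb p) (a ⊗ₜ[k] opConv k C (b ⊗ₜ[k] g))) := by
  have h1 := congrArg L (psibar_opConv E psibar cb xb hfact hdb a b g)
  rw [psibar_eq E psibar cb xb hfact hdb (a ⊗ₜ[k] opConv k C (b ⊗ₜ[k] g))] at h1
  simp only [map_sum] at h1
  exact h1.symm

lemma key1 (hfact : IsFactorisation E psibar)
    (hdb : ∀ x : C, ∑ i, xb i x • cb i = x)
    (lam : Module.Dual k C →ₗ[k] A) (b : Module.Dual k C) (a : A)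
    (b' g : Module.Dual k C) :
    ∑ i, ∑ j, lam (opConv k C (b ⊗ₜ[k] opConv k C (xb i ⊗ₜ[k] xb j))) *
        KK E (cb j) (KK E (cb i) (a ⊗ₜ[k] b') ⊗ₜ[k] g)
      = ∑ p, lam (opConv k C (b ⊗ₜ[k] xb p)) *
          KK E (cb p) (a ⊗ₜ[k] opConv k C (b' ⊗ₜ[k] g)) := by
  have := psibar_opConv_apply E psibar cb xb hfact hdb
    ((LinearMap.mul' k A) ∘ₗ rTensor A
      (lam ∘ₗ opConv k C ∘ₗ TensorProduct.mk k (Module.Dual k C) (Module.Dual k C) b))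
    a b' g
  simpa only [LinearMap.comp_apply, rTensor_tmul, TensorProduct.mk_apply,
    LinearMap.mul'_apply] using this

lemma key2 (hfact : IsFactorisation E psibar)
    (hdb : ∀ x : C, ∑ i, xb i x • cb i = x)
    (lam : Module.Dual k C →ₗ[k] A) (a : A) (b' g : Module.Dual k C) :
    ∑ i, ∑ j, lam (opConv k C (xb i ⊗ₜ[k] xb j)) *
        KK E (cb j) (KK E (cb i) (a ⊗ₜ[k] b') ⊗ₜ[k] g)
      = ∑ p, lam (xb p) * KK E (cb p) (a ⊗ₜ[k] opConv k C (b' ⊗ₜ[k] g)) := by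
  have := psibar_opConv_apply E psibar cb xb hfact hdb
    ((LinearMap.mul' k A) ∘ₗ rTensor A lam) a b' g
  simpa only [LinearMap.comp_apply, rTensor_tmul, LinearMap.mul'_apply] using this

lemma homAct_x_zero (f : Module.Dual k C →ₗ[k] A) :
    homAct (LinearMap.mul' k A) psibar f (0 : Module.Dual k C ⊗[k] A) = 0 := by
  ext d
  simp [homAct, TensorProduct.mk_apply]

lemma homAct_x_add (f : Module.Dual k C →ₗ[k] A) (x y : Module.Dual k C ⊗[k] A) :
    homAct (LinearMap.mul' k A) psibar f (x + y)
      = homAct (LinearMap.mul' k A) psibar f x + homAct (LinearMap.mul' k A) psibar f y := by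
  ext d
  simp [homAct, TensorProduct.mk_apply, add_tmul]

lemma homAct_f_zero (x : Module.Dual k C ⊗[k] A) :
    homAct (LinearMap.mul' k A) psibar (0 : Module.Dual k C →ₗ[k] A) x = 0 := by
  ext d
  simp [homAct]

lemma homAct_f_add (f g : Module.Dual k C →ₗ[k] A) (x : Module.Dual k C ⊗[k] A) :
    homAct (LinearMap.mul' k A) psibar (f + g) x
      = homAct (LinearMap.mul' k A) psibar f x + homAct (LinearMap.mul' k A) psibar g x := by
  ext d
  simp [homAct, LinearMap.rTensor_add]

lemma theta_eq (lam : Module.Dual k C →ₗ[k] A) (x : Module.Dual k C ⊗[k] A) :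
    TensorProduct.curry ((LinearMap.mul' k A) ∘ₗ rTensor A lam ∘ₗ homActAux psibar) x
      = homAct (LinearMap.mul' k A) psibar lam x := by
  ext d
  simp only [homAct, TensorProduct.curry_apply, LinearMap.comp_apply,
    TensorProduct.mk_apply]

lemma integral_apply (hfact : IsFactorisation E psibar)
    (hdb : ∀ x : C, ∑ i, xb i x • cb i = x)
    (lam : Module.Dual k C →ₗ[k] A) (hlam : IsSmashIntegral psibar lam)
    (a : A) (d : Module.Dual k C) :
    a * lam d = ∑ i, lam (xb i) * KK E (cb i) (a ⊗ₜ[k] d) := by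
  have h := LinearMap.congr_fun (hlam a) d
  rw [LinearMap.comp_apply, LinearMap.mulLeft_apply] at h
  rw [h, homAct_mul'_tmul E psibar cb xb hfact hdb]
  exact Finset.sum_congr rfl fun i _ => by rw [opConv_counit_left]

lemma smashMul_one_left (hfact : IsFactorisation E psibar)
    (hdb : ∀ x : C, ∑ i, xb i x • cb i = x) (x : Module.Dual k C ⊗[k] A) :
    smashMul psibar (smashOne k A C ⊗ₜ[k] x) = x := by
  induction x using TensorProduct.induction_on with
  | zero => simp
  | tmul b a =>
      rw [smashOne, smashMul_tmul E psibar cb xb hfact hdb]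
      calc ∑ i, opConv k C ((Coalgebra.counit (R := k) (A := C)) ⊗ₜ[k] xb i) ⊗ₜ[k]
              (KK E (cb i) ((1 : A) ⊗ₜ[k] b) * a)
          = ∑ i, xb i ⊗ₜ[k] evFst (k := k) (cb i) (b ⊗ₜ[k] a) := by
            refine Finset.sum_congr rfl fun i _ => ?_
            rw [opConv_counit_left, KK_one, evFst_tmul, smul_mul_assoc, one_mul]
        _ = b ⊗ₜ[k] a := sum_tmul_evFst cb xb hdb _
  | add u v hu hv => simp only [tmul_add, map_add, hu, hv]

lemma smashMul_eps_one (hfact : IsFactorisation E psibar)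
    (hdb : ∀ x : C, ∑ i, xb i x • cb i = x) (a : A) :
    smashMul psibar (((Coalgebra.counit (R := k) (A := C)) ⊗ₜ[k] a) ⊗ₜ[k] smashOne k A C)
      = (Coalgebra.counit (R := k) (A := C)) ⊗ₜ[k] a := by
  rw [smashOne, smashMul_tmul E psibar cb xb hfact hdb]
  calc ∑ i, opConv k C ((Coalgebra.counit (R := k) (A := C)) ⊗ₜ[k] xb i) ⊗ₜ[k]
          (KK E (cb i) (a ⊗ₜ[k] (Coalgebra.counit (R := k) (A := C))) * 1)
      = ∑ i, ((Coalgebra.counit (R := k) (A := C)) (cb i) • xb i) ⊗ₜ[k] a := by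
        refine Finset.sum_congr rfl fun i _ => ?_
        rw [opConv_counit_left, KK_counit, mul_one, tmul_smul, smul_tmul']
    _ = (Coalgebra.counit (R := k) (A := C)) ⊗ₜ[k] a := by
        rw [← sum_tmul, dual_db cb xb hdb]

lemma act_one (hfact : IsFactorisation E psibar)
    (hdb : ∀ x : C, ∑ i, xb i x • cb i = x) (lam : Module.Dual k C →ₗ[k] A) :
    homAct (LinearMap.mul' k A) psibar lam (smashOne k A C) = lam := by
  ext d
  rw [smashOne, homAct_mul'_tmul E psibar cb xb hfact hdb]
  calc ∑ i, lam (opConv k C ((Coalgebra.counit (R := k) (A := C)) ⊗ₜ[k] xb i)) *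
          KK E (cb i) ((1 : A) ⊗ₜ[k] d)
      = ∑ i, d (cb i) • lam (xb i) := by
        refine Finset.sum_congr rfl fun i _ => ?_
        rw [opConv_counit_left, KK_one, mul_smul_comm, mul_one]
    _ = lam d := by
        calc ∑ i, d (cb i) • lam (xb i) = lam (∑ i, d (cb i) • xb i) := by
              rw [map_sum]
              exact Finset.sum_congr rfl fun i _ => (map_smul lam _ _).symm
          _ = lam d := by rw [dual_db cb xb hdb]

lemma homAct_x_sum {ι : Type*} (f : Module.Dual k C →ₗ[k] A) (s : Finset ι)
    (t : ι → Module.Dual k C ⊗[k] A) :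
    homAct (LinearMap.mul' k A) psibar f (∑ i ∈ s, t i)
      = ∑ i ∈ s, homAct (LinearMap.mul' k A) psibar f (t i) := by
  ext d
  simp only [homAct, LinearMap.comp_apply, TensorProduct.mk_apply, LinearMap.coe_sum,
    Finset.sum_apply]
  rw [sum_tmul, map_sum, map_sum, map_sum]

lemma act_assoc (hfact : IsFactorisation E psibar)
    (hdb : ∀ x : C, ∑ i, xb i x • cb i = x)
    (lam : Module.Dual k C →ₗ[k] A) (x x' : Module.Dual k C ⊗[k] A) :
    homAct (LinearMap.mul' k A) psibar lam (smashMul psibar (x ⊗ₜ[k] x'))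
      = homAct (LinearMap.mul' k A) psibar
          (homAct (LinearMap.mul' k A) psibar lam x) x' := by
  induction x using TensorProduct.induction_on with
  | zero =>
      rw [zero_tmul, map_zero, homAct_x_zero, homAct_f_zero]
  | add y z hy hz =>
      rw [add_tmul, map_add, homAct_x_add, hy, hz, homAct_x_add, homAct_f_add]
  | tmul b a =>
    induction x' using TensorProduct.induction_on with
    | zero => rw [tmul_zero, map_zero, homAct_x_zero, homAct_x_zero]
    | add y z hy hz => rw [tmul_add, map_add, homAct_x_add, hy, hz, homAct_x_add]
    | tmul b' a' =>
        ext d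
        have hR : homAct (LinearMap.mul' k A) psibar
              (homAct (LinearMap.mul' k A) psibar lam (b ⊗ₜ[k] a)) (b' ⊗ₜ[k] a') d
            = ∑ m, (∑ p, lam (opConv k C (b ⊗ₜ[k] xb p)) *
                KK E (cb p) (a ⊗ₜ[k] opConv k C (b' ⊗ₜ[k] xb m))) *
                  KK E (cb m) (a' ⊗ₜ[k] d) := by
          rw [homAct_mul'_tmul E psibar cb xb hfact hdb]
          exact Finset.sum_congr rfl fun m _ => by
            rw [homAct_mul'_tmul E psibar cb xb hfact hdb]
        rw [hR, smashMul_tmul E psibar cb xb hfact hdb, homAct_x_sum psibar,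
          LinearMap.sum_apply]
        calc ∑ i, homAct (LinearMap.mul' k A) psibar lam
                (opConv k C (b ⊗ₜ[k] xb i) ⊗ₜ[k] (KK E (cb i) (a ⊗ₜ[k] b') * a')) d
            = ∑ i, ∑ j, ∑ m,
                (lam (opConv k C (b ⊗ₜ[k] opConv k C (xb i ⊗ₜ[k] xb j))) *
                  KK E (cb j) (KK E (cb i) (a ⊗ₜ[k] b') ⊗ₜ[k] xb m)) *
                    KK E (cb m) (a' ⊗ₜ[k] d) := by
              refine Finset.sum_congr rfl fun i _ => ?_
              rw [homAct_mul'_tmul E psibar cb xb hfact hdb]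
              refine Finset.sum_congr rfl fun j _ => ?_
              rw [opConv_assoc, KK_mul E cb xb hdb, Finset.mul_sum]
              exact Finset.sum_congr rfl fun m _ => (mul_assoc _ _ _).symm
          _ = ∑ m, ∑ i, ∑ j,
                (lam (opConv k C (b ⊗ₜ[k] opConv k C (xb i ⊗ₜ[k] xb j))) *
                  KK E (cb j) (KK E (cb i) (a ⊗ₜ[k] b') ⊗ₜ[k] xb m)) *
                    KK E (cb m) (a' ⊗ₜ[k] d) := by
              exact (Finset.sum_congr rfl fun i _ =>
                Finset.sum_comm).trans (Finset.sum_comm)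
          _ = ∑ m, (∑ i, ∑ j,
                lam (opConv k C (b ⊗ₜ[k] opConv k C (xb i ⊗ₜ[k] xb j))) *
                  KK E (cb j) (KK E (cb i) (a ⊗ₜ[k] b') ⊗ₜ[k] xb m)) *
                    KK E (cb m) (a' ⊗ₜ[k] d) := by
              refine Finset.sum_congr rfl fun m _ => ?_
              rw [Finset.sum_mul]
              exact Finset.sum_congr rfl fun i _ => (Finset.sum_mul _ _ _).symm
          _ = ∑ m, (∑ p, lam (opConv k C (b ⊗ₜ[k] xb p)) *
                KK E (cb p) (a ⊗ₜ[k] opConv k C (b' ⊗ₜ[k] xb m))) *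
                  KK E (cb m) (a' ⊗ₜ[k] d) := by
              refine Finset.sum_congr rfl fun m _ => ?_
              rw [key1 E psibar cb xb hfact hdb]

lemma act_int (hfact : IsFactorisation E psibar)
    (hdb : ∀ x : C, ∑ i, xb i x • cb i = x)
    (lam : Module.Dual k C →ₗ[k] A) (hlam : IsSmashIntegral psibar lam)
    (a : A) (x : Module.Dual k C ⊗[k] A) :
    homAct (LinearMap.mul' k A) psibar lam
        (smashMul psibar (((Coalgebra.counit (R := k) (A := C)) ⊗ₜ[k] a) ⊗ₜ[k] x))
      = LinearMap.mulLeft k a ∘ₗ homAct (LinearMap.mul' k A) psibar lam x := by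
  induction x using TensorProduct.induction_on with
  | zero =>
      rw [tmul_zero, map_zero, homAct_x_zero, LinearMap.comp_zero]
  | add y z hy hz =>
      rw [tmul_add, map_add, homAct_x_add, hy, hz, homAct_x_add, LinearMap.comp_add]
  | tmul b' a' =>
      ext d
      rw [LinearMap.comp_apply, LinearMap.mulLeft_apply]
      rw [smashMul_tmul E psibar cb xb hfact hdb, homAct_x_sum psibar,
        LinearMap.sum_apply]
      calc ∑ i, homAct (LinearMap.mul' k A) psibar lam
              (opConv k C ((Coalgebra.counit (R := k) (A := C)) ⊗ₜ[k] xb i) ⊗ₜ[k]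
                (KK E (cb i) (a ⊗ₜ[k] b') * a')) d
          = ∑ i, ∑ j, ∑ m,
              (lam (opConv k C (xb i ⊗ₜ[k] xb j)) *
                KK E (cb j) (KK E (cb i) (a ⊗ₜ[k] b') ⊗ₜ[k] xb m)) *
                  KK E (cb m) (a' ⊗ₜ[k] d) := by
            refine Finset.sum_congr rfl fun i _ => ?_
            rw [opConv_counit_left, homAct_mul'_tmul E psibar cb xb hfact hdb]
            refine Finset.sum_congr rfl fun j _ => ?_
            rw [KK_mul E cb xb hdb, Finset.mul_sum]
            exact Finset.sum_congr rfl fun m _ => (mul_assoc _ _ _).symm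
        _ = ∑ m, ∑ i, ∑ j,
              (lam (opConv k C (xb i ⊗ₜ[k] xb j)) *
                KK E (cb j) (KK E (cb i) (a ⊗ₜ[k] b') ⊗ₜ[k] xb m)) *
                  KK E (cb m) (a' ⊗ₜ[k] d) := by
            exact (Finset.sum_congr rfl fun i _ =>
              Finset.sum_comm).trans (Finset.sum_comm)
        _ = ∑ m, (∑ i, ∑ j,
              lam (opConv k C (xb i ⊗ₜ[k] xb j)) *
                KK E (cb j) (KK E (cb i) (a ⊗ₜ[k] b') ⊗ₜ[k] xb m)) *
                  KK E (cb m) (a' ⊗ₜ[k] d) := by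
            refine Finset.sum_congr rfl fun m _ => ?_
            rw [Finset.sum_mul]
            exact Finset.sum_congr rfl fun i _ => (Finset.sum_mul _ _ _).symm
        _ = ∑ m, (a * lam (opConv k C (b' ⊗ₜ[k] xb m))) * KK E (cb m) (a' ⊗ₜ[k] d) := by
            refine Finset.sum_congr rfl fun m _ => ?_
            rw [key2 E psibar cb xb hfact hdb,
              ← integral_apply E psibar cb xb hfact hdb lam hlam]
        _ = a * ∑ m, lam (opConv k C (b' ⊗ₜ[k] xb m)) * KK E (cb m) (a' ⊗ₜ[k] d) := by
            rw [Finset.mul_sum]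
            exact Finset.sum_congr rfl fun m _ => mul_assoc _ _ _
        _ = a * homAct (LinearMap.mul' k A) psibar lam (b' ⊗ₜ[k] a') d := by
            rw [homAct_mul'_tmul E psibar cb xb hfact hdb]


end Basis

end SmashProofAux


/-- `θ : Int(B #_ψ̄ A) → _AHom_X(X, Hom(B,A))`, `θ(λ)(x) = λ·x`,
is a bijection with inverse `Φ ↦ Φ(1_X)`. -/
theorem integrals_bijective_bimoduleMaps [Module.Finite k C] [Module.Projective k C]
    (E : Entwining k A C)
    (ψbar : A ⊗[k] Module.Dual k C →ₗ[k] Module.Dual k C ⊗[k] A)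
    (hfact : IsFactorisation E ψbar) :
    -- `θ(λ)(x)(b') = (λ·x)(b')`
    let θ : (Module.Dual k C →ₗ[k] A) →
        (Module.Dual k C ⊗[k] A →ₗ[k] (Module.Dual k C →ₗ[k] A)) :=
      fun lam => TensorProduct.curry
        ((LinearMap.mul' k A) ∘ₗ rTensor A lam ∘ₗ homActAux ψbar)
    -- `θ` maps integrals to bimodule maps:
    (∀ lam, IsSmashIntegral ψbar lam → IsBimoduleMap ψbar (θ lam)) ∧
    -- `Φ ↦ Φ(1_X)` is a left inverse of `θ` (so `θ` is injective on integrals):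
    (∀ lam, IsSmashIntegral ψbar lam → θ lam (smashOne k A C) = lam) ∧
    -- and a right inverse: every bimodule map `Φ` is `θ` of the integral `Φ(1_X)`:
    (∀ Φ, IsBimoduleMap ψbar Φ →
      IsSmashIntegral ψbar (Φ (smashOne k A C)) ∧ θ (Φ (smashOne k A C)) = Φ) := by
  intro θ
  obtain ⟨n, cb, xb, hdb⟩ := SmashProofAux.exists_dual_basis k C
  have hθ : ∀ (lam : Module.Dual k C →ₗ[k] A) (x : Module.Dual k C ⊗[k] A),
      θ lam x = homAct (LinearMap.mul' k A) ψbar lam x :=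
    fun lam x => SmashProofAux.theta_eq ψbar lam x
  refine ⟨?_, ?_, ?_⟩
  · intro lam hlam
    constructor
    · intro x x'
      simp only [hθ]
      exact SmashProofAux.act_assoc E ψbar cb xb hfact hdb lam x x'
    · intro a x
      simp only [hθ]
      exact SmashProofAux.act_int E ψbar cb xb hfact hdb lam hlam a x
  · intro lam _
    simp only [hθ]
    exact SmashProofAux.act_one E ψbar cb xb hfact hdb lam
  · intro Φ hΦ
    have hone : ∀ x : Module.Dual k C ⊗[k] A,
        smashMul ψbar (smashOne k A C ⊗ₜ[k] x) = x :=
      SmashProofAux.smashMul_one_left E ψbar cb xb hfact hdb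
    constructor
    · intro a
      have h1 : LinearMap.mulLeft k a ∘ₗ Φ (smashOne k A C)
          = Φ ((Coalgebra.counit (R := k) (A := C)) ⊗ₜ[k] a) := by
        rw [← hΦ.2 a (smashOne k A C),
          SmashProofAux.smashMul_eps_one E ψbar cb xb hfact hdb a]
      have h2 : homAct (LinearMap.mul' k A) ψbar (Φ (smashOne k A C))
            ((Coalgebra.counit (R := k) (A := C)) ⊗ₜ[k] a)
          = Φ ((Coalgebra.counit (R := k) (A := C)) ⊗ₜ[k] a) := by
        rw [← hΦ.1 (smashOne k A C) ((Coalgebra.counit (R := k) (A := C)) ⊗ₜ[k] a),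
          hone]
      rw [h1, h2]
    · refine LinearMap.ext fun x => ?_
      rw [hθ, ← hΦ.1 (smashOne k A C) x, hone]
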